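/- In every reachable configuration of the (k,ℓ)-pebble game with colors, each pebble of color c_i lying on a vertex v is the root of a (possibly empty) monochromatic tree-piece of color c_i: the edges of color c_i whose maximal directed c_i-colored path terminates at v form a tree directed toward v (possibly consisting of the single vertex v). -/
import Mathlib


open scoped Classical

namespace PebbleGame

/-- A configuration of the `(k,ℓ)`-pebble game with colors: a directed multigraph
whose edges are records `(tail, head, color)` (the color of an edge is the color of
the unique pebble lying on it), together with the multiset of colors of the pebbles
sitting on each vertex. -/
structure PGConfig (V : Type) (k : ℕ) where
  edges : Multiset (V × V × Fin k)
  pebs : V → Multiset (Fin k)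

variable {V : Type} [DecidableEq V] {k ℓ : ℕ}

/-- The configuration resulting from an add-edge move: a pebble of color `c` is picked
up from `v`, the directed edge `vw` is added and the pebble is placed on it. -/
def addEdgeCfg (H : PGConfig V k) (v w : V) (c : Fin k) : PGConfig V k :=
  ⟨(v, w, c) ::ₘ H.edges, Function.update H.pebs v ((H.pebs v).erase c)⟩

/-- The configuration resulting from a pebble-slide move along the edge `(v, w, c)`,
using a pebble of color `c'` on `w`: the edge `vw` is replaced by `wv`, the pebble of
color `c` that was on the edge goes to `v`, and the pebble of color `c'` from `w` is
placed on the new edge `wv`. -/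
def slideCfg (H : PGConfig V k) (v w : V) (c c' : Fin k) : PGConfig V k :=
  ⟨(w, v, c') ::ₘ H.edges.erase (v, w, c),
    Function.update (Function.update H.pebs w ((H.pebs w).erase c')) v
      (c ::ₘ Function.update H.pebs w ((H.pebs w).erase c') v)⟩

/-- A legal move of the `(k,ℓ)`-pebble game with colors. -/
inductive Step (k ℓ : ℕ) : PGConfig V k → PGConfig V k → Prop
  | add (H : PGConfig V k) (v w : V) (c : Fin k)
      (hpeb : ℓ + 1 ≤ ∑ u ∈ ({v, w} : Finset V), (H.pebs u).card)
      (hc : c ∈ H.pebs v) :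
      Step k ℓ H (addEdgeCfg H v w c)
  | slide (H : PGConfig V k) (v w : V) (c c' : Fin k)
      (he : (v, w, c) ∈ H.edges)
      (hc : c' ∈ H.pebs w) :
      Step k ℓ H (slideCfg H v w c c')

/-- The initial configuration: no edges, and one pebble of each of the `k` colors on
every vertex. -/
def initCfg (V : Type) [DecidableEq V] [Fintype V] (k : ℕ) : PGConfig V k :=
  ⟨0, fun _ => Finset.univ.val⟩

/-- A configuration is reachable if it arises from the initial configuration by a
finite sequence of legal moves. -/
def Reachable [Fintype V] (k ℓ : ℕ) (H : PGConfig V k) : Prop :=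
  Relation.ReflTransGen (Step k ℓ) (initCfg V k) H

/-- The underlying undirected multigraph (multiset of edges) of a configuration. -/
def undirected (H : PGConfig V k) : Multiset (Sym2 V) :=
  H.edges.map fun e => s(e.1, e.2.1)

/-- The (undirected) edges of a configuration carrying a pebble of color `c`. -/
def monoEdges (H : PGConfig V k) (c : Fin k) : Multiset (Sym2 V) :=
  (H.edges.filter fun e => e.2.2 = c).map fun e => s(e.1, e.2.1)

/-- The undirected edges of color `c` among a multiset `F` of directed colored
edges. -/
def monoOf (F : Multiset (V × V × Fin k)) (c : Fin k) : Multiset (Sym2 V) :=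
  (F.filter fun e => e.2.2 = c).map fun e => s(e.1, e.2.1)

/-- `G` (a multiset of undirected edges on the fixed finite vertex set `V`) is a
`(k,ℓ)`-pebble-game graph if it is the underlying undirected multigraph of some
reachable configuration. -/
def PebbleGameGraph [Fintype V] (k ℓ : ℕ) (E : Multiset (Sym2 V)) : Prop :=
  ∃ H : PGConfig V k, Reachable k ℓ H ∧ undirected H = E

/-- The edges of `E` spanned by the vertex set `S` (both endpoints in `S`). -/
def spanned (E : Multiset (Sym2 V)) (S : Finset V) : Multiset (Sym2 V) :=
  E.filter fun e => e ∈ S.sym2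

/-- A multigraph is `(k,ℓ)`-sparse if every nonempty set of `n'` vertices spans at
most `k n' - ℓ` edges. -/
def Sparse (k ℓ : ℕ) (E : Multiset (Sym2 V)) : Prop :=
  ∀ S : Finset V, S.Nonempty → (spanned E S).card ≤ k * S.card - ℓ

/-- A multigraph is `(k,ℓ)`-tight if it is `(k,ℓ)`-sparse with exactly `k|V| - ℓ`
edges. -/
def Tight [Fintype V] (k ℓ : ℕ) (E : Multiset (Sym2 V)) : Prop :=
  Sparse k ℓ E ∧ E.card = k * Fintype.card V - ℓ

/-- Connectivity (as undirected multigraphs) via the edges of `F`. -/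
def Conn (F : Multiset (Sym2 V)) : V → V → Prop :=
  Relation.ReflTransGen fun a b => s(a, b) ∈ F

/-- The connected components of the graph with vertex set `S` and edge multiset `F`
(whose edges are assumed to be spanned by `S`), as a finset of vertex sets. -/
noncomputable def components (S : Finset V) (F : Multiset (Sym2 V)) : Finset (Finset V) :=
  S.image fun v => S.filter fun u => Conn F v u

/-- The tree-pieces of the graph `(S, F)`: connected components that contain no cycle,
i.e. whose spanned edge count is exactly one less than their vertex count (an isolated
vertex is a tree-piece). -/
noncomputable def treePieces (S : Finset V) (F : Multiset (Sym2 V)) : Finset (Finset V) :=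
  (components S F).filter fun C => (spanned F C).card + 1 = C.card

/-- The number of tree-pieces of the graph `(S, F)`. -/
noncomputable def treePieceCount (S : Finset V) (F : Multiset (Sym2 V)) : ℕ :=
  (treePieces S F).card

/-- A multigraph contains a cycle iff some nonempty vertex set spans at least as many
edges as it has vertices. -/
def HasCycle (F : Multiset (Sym2 V)) : Prop :=
  ∃ S : Finset V, S.Nonempty ∧ S.card ≤ (spanned F S).card

/-- A spanning tree on the whole (finite) vertex set: connected with `|V| - 1` edges. -/
def IsSpanningTree [Fintype V] (T : Multiset (Sym2 V)) : Prop :=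
  (∀ u v : V, Conn T u v) ∧ T.card + 1 = Fintype.card V

/-- A spanning map-graph: the edges admit an orientation in which every vertex has
out-degree exactly one. -/
def IsSpanningMapGraph [Fintype V] (T : Multiset (Sym2 V)) : Prop :=
  ∃ M : Multiset (V × V), M.map (fun p => s(p.1, p.2)) = T ∧
    ∀ v : V, (M.filter fun p => p.1 = v).card = 1

/-- A `(k,ℓ)`-maps-and-trees decomposition: `ℓ` edge-disjoint spanning trees and
`k - ℓ` edge-disjoint spanning map-graphs whose union is `E`. -/
def MapsAndTrees [Fintype V] (k ℓ : ℕ) (E : Multiset (Sym2 V)) : Prop :=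
  ∃ (T : Fin ℓ → Multiset (Sym2 V)) (M : Fin (k - ℓ) → Multiset (Sym2 V)),
    ((∑ i, T i) + ∑ j, M j) = E ∧ (∀ i, IsSpanningTree (T i)) ∧
      ∀ j, IsSpanningMapGraph (M j)

/-- `(S, T)` is a (possibly single-vertex) tree: nonempty vertex set `S`, edges spanned
by `S`, connected on `S`, and `|T| + 1 = |S|`. -/
def IsTreeOn (S : Finset V) (T : Multiset (Sym2 V)) : Prop :=
  S.Nonempty ∧ (∀ e ∈ T, e ∈ S.sym2) ∧ (∀ u ∈ S, ∀ v ∈ S, Conn T u v) ∧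
    T.card + 1 = S.card

/-- An `ℓTk` decomposition of `E`: `ℓ` edge-disjoint (not necessarily spanning,
possibly single-vertex) trees `(S i, T i)` whose edges partition `E`, such that every
vertex belongs to exactly `k` of the trees. -/
def LTkDecomp (k ℓ : ℕ) (E : Multiset (Sym2 V)) (S : Fin ℓ → Finset V)
    (T : Fin ℓ → Multiset (Sym2 V)) : Prop :=
  (∑ i, T i) = E ∧ (∀ i, IsTreeOn (S i) (T i)) ∧
    ∀ v : V, (Finset.univ.filter fun i => v ∈ S i).card = k

/-- A proper `ℓTk`: an `ℓTk` decomposition such that every nonempty subgraph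
(vertex set `U`, together with a sub-multiset `F i` of each tree spanned by `U`)
contains at least `ℓ` tree-pieces, the tree-pieces being the connected components of
the intersections of the trees with the subgraph. -/
def ProperLTk (k ℓ : ℕ) (E : Multiset (Sym2 V)) : Prop :=
  ∃ (S : Fin ℓ → Finset V) (T : Fin ℓ → Multiset (Sym2 V)),
    LTkDecomp k ℓ E S T ∧
      ∀ U : Finset V, U.Nonempty →
        ∀ F : Fin ℓ → Multiset (Sym2 V),
          (∀ i, F i ≤ T i) → (∀ i, ∀ e ∈ F i, e ∈ U.sym2) →
            ℓ ≤ ∑ i, treePieceCount (U ∩ S i) (F i)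

/-- One pebble-slide move (as a relation between configurations). -/
def SlideRel (k : ℕ) (A B : PGConfig V k) : Prop :=
  ∃ (v w : V) (c c' : Fin k), (v, w, c) ∈ A.edges ∧ c' ∈ A.pebs w ∧
    B = slideCfg A v w c c'

/-- A canonical move of the `(k,ℓ)`-pebble game with colors: add-edge moves cover the
new edge with a color present on both endpoints if one exists, and otherwise with the
highest-numbered color present; pebble-slide moves never create a monochromatic
cycle. -/
inductive CanStep (k ℓ : ℕ) : PGConfig V k → PGConfig V k → Prop
  | add (H : PGConfig V k) (v w : V) (c : Fin k)
      (hpeb : ℓ + 1 ≤ ∑ u ∈ ({v, w} : Finset V), (H.pebs u).card)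
      (hc : c ∈ H.pebs v)
      (hcanon : c ∈ H.pebs w ∨
        ((∀ c' : Fin k, c' ∈ H.pebs v → c' ∉ H.pebs w) ∧
          ∀ c' : Fin k, (c' ∈ H.pebs v ∨ c' ∈ H.pebs w) → c' ≤ c)) :
      CanStep k ℓ H (addEdgeCfg H v w c)
  | slide (H : PGConfig V k) (v w : V) (c c' : Fin k)
      (he : (v, w, c) ∈ H.edges)
      (hc : c' ∈ H.pebs w)
      (hnocycle : ∀ i : Fin k,
        HasCycle (monoEdges (slideCfg H v w c c') i) → HasCycle (monoEdges H i)) :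
      CanStep k ℓ H (slideCfg H v w c c')

/-- The graph obtained from a configuration by replacing every pebble lying on a
vertex by a loop at that vertex. -/
def withLoops [Fintype V] (H : PGConfig V k) : Multiset (Sym2 V) :=
  undirected H + Finset.univ.val.bind fun v => Multiset.replicate (H.pebs v).card s(v, v)

end PebbleGame
open PebbleGame


private lemma eq_of_mem_card_le_one {α : Type*} {s : Multiset α} (h : s.card ≤ 1) {x y : α}
    (hx : x ∈ s) (hy : y ∈ s) : x = y := by
  obtain ⟨t, rfl⟩ := Multiset.exists_cons_of_mem hx
  have ht : t = 0 := by
    have := Multiset.card_cons x t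
    exact Multiset.card_eq_zero.mp (by omega)
  subst ht
  have := hy
  simp at this
  exact this.symm

private lemma pebble_invariant {V : Type} [Fintype V] [DecidableEq V] {k ℓ : ℕ}
    {H : PebbleGame.PGConfig V k} (hH : PebbleGame.Reachable k ℓ H) :
    ∀ (u : V) (c : Fin k),
      (H.edges.filter fun e => e.1 = u ∧ e.2.2 = c).card + (H.pebs u).count c = 1 := by
  induction hH with
  | refl => intro u c; simp [PebbleGame.initCfg]
  | @tail B H2 hab hstep ih =>
    intro u c
    cases hstep with
    | add v w c0 hpeb hc =>
      have key := ih u c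
      have hcount : 1 ≤ (B.pebs v).count c0 := Multiset.one_le_count_iff_mem.mpr hc
      simp only [PebbleGame.addEdgeCfg, Multiset.filter_cons, Multiset.card_add,
        Function.update_apply]
      by_cases hu : u = v
      · subst hu
        by_cases hcc : c = c0
        · subst hcc
          rw [if_pos ⟨rfl, rfl⟩, if_pos rfl, Multiset.count_erase_self]
          simp only [Multiset.card_singleton]
          omega
        · rw [if_neg (by tauto), if_pos rfl, Multiset.count_erase_of_ne hcc]
          simpa using key
      · rw [if_neg (by intro h; exact hu h.1.symm), if_neg (Ne.symm ?_)]
        · simpa using key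
        · exact fun h => hu h.symm
    | slide v w c0 c' he hc =>
      have hcount : 1 ≤ (B.pebs w).count c' := Multiset.one_le_count_iff_mem.mpr hc
      obtain ⟨E', hE⟩ := Multiset.exists_cons_of_mem he
      have key := ih u c
      rw [hE] at key
      simp only [Multiset.filter_cons, Multiset.card_add] at key
      simp only [PebbleGame.slideCfg, hE, Multiset.erase_cons_head, Multiset.filter_cons,
        Multiset.card_add, Function.update_apply]
      have hErase : ∀ s : Multiset (Fin k),
          (s.erase c').count c = s.count c - (if c = c' then 1 else 0) := by
        intro s
        by_cases h : c = c'
        · subst h; simp [Multiset.count_erase_self]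
        · simp [Multiset.count_erase_of_ne h, h]
      have hCons : ∀ (s : Multiset (Fin k)) (d : Fin k),
          (d ::ₘ s).count c = s.count c + (if c = d then 1 else 0) :=
        fun s d => Multiset.count_cons c d s
      have hA : Multiset.card (if (w, v, c').1 = u ∧ (w, v, c').2.2 = c then
            ({(w, v, c')} : Multiset (V × V × Fin k)) else 0)
          = if u = w ∧ c = c' then 1 else 0 := by
        by_cases h : u = w ∧ c = c'
        · rw [if_pos ⟨h.1.symm, h.2.symm⟩, if_pos h]; rfl
        · rw [if_neg (fun hh => h ⟨hh.1.symm, hh.2.symm⟩), if_neg h]; rfl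
      have hB : Multiset.card (if (v, w, c0).1 = u ∧ (v, w, c0).2.2 = c then
            ({(v, w, c0)} : Multiset (V × V × Fin k)) else 0)
          = if u = v ∧ c = c0 then 1 else 0 := by
        by_cases h : u = v ∧ c = c0
        · rw [if_pos ⟨h.1.symm, h.2.symm⟩, if_pos h]; rfl
        · rw [if_neg (fun hh => h ⟨hh.1.symm, hh.2.symm⟩), if_neg h]; rfl
      rw [hA]
      rw [hB] at key
      have e1 : ∀ (x : V) (d : Fin k), (if x = x ∧ c = d then (1:ℕ) else 0)
          = if c = d then 1 else 0 := by
        intro x d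
        by_cases h : c = d
        · rw [if_pos ⟨rfl, h⟩, if_pos h]
        · rw [if_neg (fun hh => h hh.2), if_neg h]
      by_cases huv : u = v <;> by_cases huw : u = w
      · subst huv; subst huw
        have hcc : (if c = c' then 1 else 0) ≤ Multiset.count c (B.pebs u) := by
          by_cases h : c = c'
          · rw [if_pos h, h]; exact hcount
          · rw [if_neg h]; exact Nat.zero_le _
        rw [if_pos (rfl : u = u), if_pos (rfl : u = u), hCons, hErase, e1]
        rw [e1] at key
        split_ifs at hcc key ⊢ <;> omega
      · subst huv
        rw [if_neg (fun h : u = w ∧ c = c' => huw h.1), if_pos (rfl : u = u),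
          if_neg huw, hCons]
        rw [e1] at key
        split_ifs at key ⊢ <;> omega
      · subst huw
        have hcc : (if c = c' then 1 else 0) ≤ Multiset.count c (B.pebs u) := by
          by_cases h : c = c'
          · rw [if_pos h, h]; exact hcount
          · rw [if_neg h]; exact Nat.zero_le _
        rw [if_neg huv, if_pos (rfl : u = u), hErase, e1]
        rw [if_neg (fun h : u = v ∧ c = c0 => huv h.1)] at key
        split_ifs at hcc key ⊢ <;> omega
      · rw [if_neg (fun h : u = w ∧ c = c' => huw h.1), if_neg huv, if_neg huw]
        rw [if_neg (fun h : u = v ∧ c = c0 => huv h.1)] at key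
        omega

/-- in every reachable configuration, each pebble of color `c` lying on
a vertex `v` is the root of a (possibly empty) monochromatic tree-piece of color `c`:
letting `R` be the set of vertices whose maximal directed `c`-colored path terminates
at `v`, the color-`c` edges with tail in `R` stay inside `R` and form a tree with
`|R| - 1` edges directed toward `v`. -/
theorem pebbles_are_roots_of_trees {V : Type} [Fintype V] [DecidableEq V]
    (k ℓ : ℕ) (hk : 1 ≤ k) (hℓ : ℓ ≤ 2 * k - 1) (H : PGConfig V k)
    (hH : Reachable k ℓ H) (c : Fin k) (v : V) (hpeb : c ∈ H.pebs v)
    (R : Finset V)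
    (hR : R = Finset.univ.filter fun u =>
        Relation.ReflTransGen (fun a b => (a, b, c) ∈ H.edges) u v) :
    v ∈ R ∧ (∀ e ∈ H.edges, e.2.2 = c → e.1 ∈ R → e.2.1 ∈ R) ∧
      (H.edges.filter fun e => e.2.2 = c ∧ e.1 ∈ R).card + 1 = R.card := by
  have inv := pebble_invariant hH
  have hmem : ∀ u, u ∈ R ↔
      Relation.ReflTransGen (fun a b => (a, b, c) ∈ H.edges) u v := by
    subst hR; intro u; simp [Finset.mem_filter]
  have hvR : v ∈ R := (hmem v).mpr Relation.ReflTransGen.refl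
  -- out-degree of v in color c is 0
  have hvcount : 1 ≤ (H.pebs v).count c := Multiset.one_le_count_iff_mem.mpr hpeb
  have hv0 : (H.edges.filter fun e => e.1 = v ∧ e.2.2 = c).card = 0 := by
    have := inv v c; omega
  -- out-degree of any vertex is at most 1
  have hle1 : ∀ u, (H.edges.filter fun e => e.1 = u ∧ e.2.2 = c).card ≤ 1 := by
    intro u; have := inv u c; omega
  -- edges of color c with tail in R have head in R
  have hclosed : ∀ e ∈ H.edges, e.2.2 = c → e.1 ∈ R → e.2.1 ∈ R := by
    intro e he hec heR
    have he' : (e.1, e.2.1, c) ∈ H.edges := by rw [← hec]; exact he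
    rcases ((hmem e.1).mp heR).cases_head with h | ⟨b, hb, hbv⟩
    · exfalso
      have hmemf : (e.1, e.2.1, c) ∈ H.edges.filter fun e' => e'.1 = v ∧ e'.2.2 = c :=
        Multiset.mem_filter.mpr ⟨he', h, rfl⟩
      have := Multiset.card_pos_iff_exists_mem.mpr ⟨_, hmemf⟩
      omega
    · have h1 : (e.1, e.2.1, c) ∈ H.edges.filter fun e' => e'.1 = e.1 ∧ e'.2.2 = c :=
        Multiset.mem_filter.mpr ⟨he', rfl, rfl⟩
      have h2 : (e.1, b, c) ∈ H.edges.filter fun e' => e'.1 = e.1 ∧ e'.2.2 = c :=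
        Multiset.mem_filter.mpr ⟨hb, rfl, rfl⟩
      have heq := eq_of_mem_card_le_one (hle1 e.1) h1 h2
      have hb' : e.2.1 = b := congrArg (fun p => p.2.1) heq
      exact (hmem e.2.1).mpr (hb' ▸ hbv)
  refine ⟨hvR, hclosed, ?_⟩
  -- decompose the edge count as a sum of out-degrees over R
  have hsum : ∀ s : Multiset (V × V × Fin k),
      (s.filter fun e => e.2.2 = c ∧ e.1 ∈ R).card
        = ∑ u ∈ R, (s.filter fun e => e.1 = u ∧ e.2.2 = c).card := by
    intro s
    induction s using Multiset.induction with
    | empty => simp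
    | cons a s ihs =>
      simp only [Multiset.filter_cons, Multiset.card_add, ihs, Finset.sum_add_distrib]
      congr 1
      have hterm : ∀ u : V,
          Multiset.card (if a.1 = u ∧ a.2.2 = c then ({a} : Multiset (V × V × Fin k)) else 0)
            = if a.1 = u then (if a.2.2 = c then 1 else 0) else 0 := by
        intro u
        by_cases h1 : a.1 = u <;> by_cases h2 : a.2.2 = c <;>
          simp [h1, h2]
      rw [Finset.sum_congr rfl fun u _ => hterm u, Finset.sum_ite_eq]
      by_cases h1 : a.1 ∈ R <;> by_cases h2 : a.2.2 = c <;> simp [h1, h2]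
  rw [hsum H.edges]
  -- every vertex of R other than v has out-degree exactly 1
  have hone : ∀ u ∈ R.erase v,
      (H.edges.filter fun e => e.1 = u ∧ e.2.2 = c).card = 1 := by
    intro u hu
    have hne : u ≠ v := Finset.ne_of_mem_erase hu
    rcases ((hmem u).mp (Finset.mem_of_mem_erase hu)).cases_head with h | ⟨b, hb, _⟩
    · exact absurd h hne
    · have h2 : (u, b, c) ∈ H.edges.filter fun e' => e'.1 = u ∧ e'.2.2 = c :=
        Multiset.mem_filter.mpr ⟨hb, rfl, rfl⟩
      have := Multiset.card_pos_iff_exists_mem.mpr ⟨_, h2⟩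
      have := hle1 u
      omega
  rw [← Finset.add_sum_erase R _ hvR, hv0,
    Finset.sum_congr rfl hone, Finset.sum_const, smul_eq_mul, mul_one,
    Finset.card_erase_of_mem hvR]
  have : 1 ≤ R.card := Finset.card_pos.mpr ⟨v, hvR⟩
  omega
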